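/- Let n ≥ 3 and α, β ∈ ℝ. There exist constants C = C(n, α, β) > 0 and δ₀ = δ₀(n, α, β) ∈ (0,1) such that for every δ ∈ (0, δ₀) and every origin-symmetric convex body K ⊂ ℝⁿ with 1−δ ≤ ρ_K ≤ 1+δ on S^{n−1}, setting r₀ = ∫_{S^{n−1}} ρ_K dσ, one has for every θ ∈ S^{n−1}: | (R[ρ_K^α])(θ)^β − r₀^{αβ} − αβ r₀^{αβ−1} (R[ρ_K − r₀])(θ) | ≤ C δ (R[|ρ_K − r₀|])(θ). -/

import Mathlib

open MeasureTheory Metric Set Real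
open scoped ENNReal RealInnerProductSpace Pointwise

noncomputable section

abbrev Eucl (n : ℕ) := EuclideanSpace ℝ (Fin n)

/-- The support function of a set `K`. -/
def suppFn {n : ℕ} (K : Set (Eucl n)) (θ : Eucl n) : ℝ :=
  sSup ((fun x => ⟪x, θ⟫) '' K)

/-- The radial function of a set `K`. -/
def radFn {n : ℕ} (K : Set (Eucl n)) (θ : Eucl n) : ℝ :=
  sSup {t : ℝ | 0 < t ∧ t • θ ∈ K}

/-- An origin-symmetric convex body. -/
def IsSymmConvexBody {n : ℕ} (K : Set (Eucl n)) : Prop :=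
  Convex ℝ K ∧ IsCompact K ∧ (interior K).Nonempty ∧ K = -K

/-- `vol_{n-1}(K ∩ θ^⊥)`, the `(n-1)`-dimensional Hausdorff measure of the
central hyperplane section of `K` orthogonal to `θ`. -/
def secVol (n : ℕ) (K : Set (Eucl n)) (θ : Eucl n) : ℝ :=
  (μH[(n : ℝ) - 1] (K ∩ {x : Eucl n | ⟪x, θ⟫ = 0})).toReal


/-- The rotation-invariant probability measure on the unit sphere `S^{n-1}`
(normalized `(n-1)`-dimensional Hausdorff measure). -/
def sphσ (n : ℕ) : Measure (Eucl n) :=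
  (μH[(n : ℝ) - 1] (sphere (0 : Eucl n) 1))⁻¹ •
    (μH[(n : ℝ) - 1]).restrict (sphere (0 : Eucl n) 1)

/-- The spherical cap `S_ϑ(e) = {x ∈ S^{n-1} : ⟨e,x⟩ ≥ cos ϑ}`. -/
def cap {n : ℕ} (e : Eucl n) (ϑ : ℝ) : Set (Eucl n) :=
  {x ∈ sphere (0 : Eucl n) 1 | Real.cos ϑ ≤ ⟪e, x⟫}

/-- The normalized measure on the great subsphere `S^{n-1} ∩ θ^⊥`
(`(n-2)`-dimensional Hausdorff measure, normalized to a probability measure). -/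
def subsphσ (n : ℕ) (θ : Eucl n) : Measure (Eucl n) :=
  (μH[(n : ℝ) - 2] (sphere (0 : Eucl n) 1 ∩ {x : Eucl n | ⟪x, θ⟫ = 0}))⁻¹ •
    (μH[(n : ℝ) - 2]).restrict (sphere (0 : Eucl n) 1 ∩ {x : Eucl n | ⟪x, θ⟫ = 0})

/-- The spherical Radon transform, normalized so that `R 1 = 1`. -/
def radon (n : ℕ) (f : Eucl n → ℝ) (θ : Eucl n) : ℝ :=
  ∫ x, f x ∂(subsphσ n θ)



set_option maxHeartbeats 1000000

open scoped NNReal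

lemma pi_muH (k : ℕ) : (μH[(k:ℝ)] : Measure (Fin k → ℝ)) = volume := by
  have := MeasureTheory.hausdorffMeasure_pi_real (ι := Fin k)
  simpa using this

lemma muH_eucl_pos (k : ℕ) (hk : 0 < k) (s : Set (Eucl k)) (r : ℝ) (hr : 0 < r)
    (hs : ball (0 : Eucl k) r ⊆ s) : 0 < μH[(k:ℝ)] s := by
  set e := WithLp.equiv 2 (Fin k → ℝ)
  have hd : (0:ℝ) ≤ (k:ℝ) := by positivity
  have h1 : μH[(k:ℝ)] (⇑e '' s) ≤ (1:ℝ≥0)^(k:ℝ) * μH[(k:ℝ)] s :=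
    (PiLp.lipschitzWith_ofLp 2 _).hausdorffMeasure_image_le hd s
  rw [ENNReal.coe_one, ENNReal.one_rpow, one_mul] at h1
  -- e.symm is Lipschitz with some constant c
  have hanti := PiLp.antilipschitzWith_ofLp 2 (fun _ : Fin k => ℝ)
  set c : ℝ≥0 := (Fintype.card (Fin k) : ℝ≥0) ^ ((1:ℝ≥0∞)/2).toReal with hc
  have hlips : LipschitzWith c ⇑e.symm := hanti.to_rightInverse (WithLp.ofLp_toLp 2)
  have hcpos : (0:ℝ) < (c:ℝ) := by
    have : (0:ℝ≥0) < c := by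
      apply NNReal.rpow_pos
      simpa using hk
    exact_mod_cast this
  -- a small pi-ball maps into the euclidean ball
  have hball : ball (0 : Fin k → ℝ) (r / c) ⊆ ⇑e '' s := by
    intro x hx
    refine ⟨e.symm x, ?_, e.apply_symm_apply x⟩
    apply hs
    have h0 : e.symm (0 : Fin k → ℝ) = 0 := rfl
    have hl := hlips.dist_le_mul x 0
    rw [h0] at hl
    rw [mem_ball] at hx ⊢
    calc dist (e.symm x) 0 ≤ (c:ℝ) * dist x 0 := hl
    _ < (c:ℝ) * (r / c) := mul_lt_mul_of_pos_left hx hcpos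
    _ = r := by field_simp
  have hpos : 0 < μH[(k:ℝ)] (⇑e '' s) := by
    calc (0:ℝ≥0∞) < μH[(k:ℝ)] (ball (0 : Fin k → ℝ) (r / c)) := by
          rw [pi_muH]
          exact measure_ball_pos _ _ (by positivity)
    _ ≤ _ := measure_mono hball
  exact lt_of_lt_of_le hpos h1

lemma muH_eucl_lt_top (k : ℕ) (s : Set (Eucl k)) (hs : Bornology.IsBounded s) : μH[(k:ℝ)] s < ∞ := by
  set e := WithLp.equiv 2 (Fin k → ℝ)
  have hd : (0:ℝ) ≤ (k:ℝ) := by positivity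
  have hanti := PiLp.antilipschitzWith_ofLp 2 (fun _ : Fin k => ℝ)
  set c : ℝ≥0 := (Fintype.card (Fin k) : ℝ≥0) ^ ((1:ℝ≥0∞)/2).toReal with hc
  have hlips : LipschitzWith c ⇑e.symm := hanti.to_rightInverse (WithLp.ofLp_toLp 2)
  have him : s = ⇑e.symm '' (⇑e '' s) := by
    rw [Equiv.symm_image_image]
  have h1 : μH[(k:ℝ)] s ≤ (c:ℝ≥0∞)^(k:ℝ) * μH[(k:ℝ)] (⇑e '' s) := by
    nth_rewrite 1 [him]
    exact hlips.hausdorffMeasure_image_le hd _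
  have hbd : Bornology.IsBounded (⇑e '' s) := (LipschitzWith.isBounded_image (PiLp.lipschitzWith_ofLp 2 _) hs)
  obtain ⟨R, hR⟩ := hbd.subset_closedBall 0
  have h2 : μH[(k:ℝ)] (⇑e '' s) < ∞ := by
    rw [pi_muH]
    exact lt_of_le_of_lt (measure_mono hR) measure_closedBall_lt_top
  exact lt_of_le_of_lt h1 (ENNReal.mul_lt_top (ENNReal.rpow_lt_top_of_nonneg hd ENNReal.coe_ne_top) h2)

lemma pi_sphere_lt_top (k : ℕ) : μH[(k:ℝ)+1] (sphere (0 : Fin (k+2) → ℝ) 1) < ∞ := by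
  have hd : (0:ℝ) ≤ (k:ℝ)+1 := by positivity
  set face : Fin (k+2) × Bool → Set (Fin (k+2) → ℝ) := fun p =>
    {x | x p.1 = (if p.2 then 1 else -1)} ∩ closedBall 0 1 with hface
  have hcover : sphere (0 : Fin (k+2) → ℝ) 1 ⊆ ⋃ p, face p := by
    intro x hx
    rw [mem_sphere_zero_iff_norm] at hx
    have hnn : ‖x‖₊ = 1 := by
      ext; exact hx
    rw [Pi.nnnorm_def] at hnn
    obtain ⟨i, -, hi⟩ := Finset.exists_mem_eq_sup Finset.univ ⟨0, Finset.mem_univ 0⟩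
      (fun i => ‖x i‖₊)
    rw [hi] at hnn
    have habs : |x i| = 1 := by
      have : ‖x i‖ = 1 := by rw [← coe_nnnorm, hnn, NNReal.coe_one]
      simpa [Real.norm_eq_abs] using this
    have hcb : x ∈ closedBall (0 : Fin (k+2) → ℝ) 1 := by
      rw [mem_closedBall_zero_iff, hx]
    rcases (abs_eq (by norm_num : (0:ℝ) ≤ 1)).mp habs with h1 | h1
    · exact mem_iUnion.mpr ⟨(i, true), ⟨by simpa using h1, hcb⟩⟩
    · exact mem_iUnion.mpr ⟨(i, false), ⟨by simpa using h1, hcb⟩⟩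
  have hfacebound : ∀ p, μH[(k:ℝ)+1] (face p) < ∞ := by
    intro p
    set c : ℝ := (if p.2 then 1 else -1) with hc
    set g : (Fin (k+1) → ℝ) → (Fin (k+2) → ℝ) := fun u => p.1.insertNth c u with hg
    have giso : Isometry g := by
      apply Isometry.of_dist_eq
      intro u v
      rw [dist_pi_def, dist_pi_def]
      congr 1
      rw [Fin.univ_succAbove _ p.1, Finset.sup_cons, Finset.sup_map]
      simp only [hg, Fin.succAboveEmb, Fin.insertNth_apply_same, nndist_self,
        Function.Embedding.coeFn_mk, Finset.sup_map]
      rw [show ((0:ℝ≥0) ⊔ _ = _) = _ from rfl]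
      rw [← bot_eq_zero, bot_sup_eq]
      apply Finset.sup_congr rfl
      intro b _
      simp [Function.comp, Fin.insertNth_apply_succAbove]
    have hsub : face p ⊆ g '' closedBall 0 1 := by
      rintro x ⟨hx1, hx2⟩
      rw [mem_closedBall_zero_iff] at hx2
      refine ⟨p.1.removeNth x, ?_, ?_⟩
      · rw [mem_closedBall_zero_iff]
        rw [pi_norm_le_iff_of_nonneg (by norm_num)]
        intro j
        exact le_trans (norm_le_pi_norm x _) hx2
      · show p.1.insertNth c (p.1.removeNth x) = x
        have : c = x p.1 := by
          rw [hc]; exact hx1.symm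
        rw [this, Fin.insertNth_self_removeNth]
    calc μH[(k:ℝ)+1] (face p) ≤ μH[(k:ℝ)+1] (g '' closedBall 0 1) := measure_mono hsub
    _ = μH[(k:ℝ)+1] (closedBall (0 : Fin (k+1) → ℝ) 1) := giso.hausdorffMeasure_image (Or.inl hd) _
    _ < ∞ := by
        have hcast : ((k:ℝ)+1) = ((k+1 : ℕ) : ℝ) := by push_cast; ring
        rw [hcast, pi_muH]
        exact measure_closedBall_lt_top
  calc μH[(k:ℝ)+1] (sphere (0 : Fin (k+2) → ℝ) 1) ≤ ∑' p, μH[(k:ℝ)+1] (face p) :=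
        le_trans (measure_mono hcover) (MeasureTheory.measure_iUnion_le face)
  _ < ∞ := by
      rw [tsum_fintype]
      exact ENNReal.sum_lt_top.mpr fun p _ => hfacebound p

lemma eucl_coord_le_norm {k : ℕ} (a : Eucl k) (i : Fin k) : ‖a i‖ ≤ ‖a‖ := by
  rw [EuclideanSpace.norm_eq]
  have h1 : ‖a i‖ = Real.sqrt (‖a i‖^2) := by
    rw [Real.sqrt_sq (norm_nonneg _)]
  rw [h1]
  apply Real.sqrt_le_sqrt
  exact Finset.single_le_sum (f := fun j => ‖a j‖^2) (fun j _ => by positivity) (Finset.mem_univ i)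

lemma normalize_lipschitz {E : Type*} [NormedAddCommGroup E] [NormedSpace ℝ E]
    (a b : E) (ha : 1 ≤ ‖a‖) (hb : 1 ≤ ‖b‖) :
    ‖‖a‖⁻¹ • a - ‖b‖⁻¹ • b‖ ≤ 2 * ‖a - b‖ := by
  have ha0 : (0:ℝ) < ‖a‖ := lt_of_lt_of_le one_pos ha
  have hb0 : (0:ℝ) < ‖b‖ := lt_of_lt_of_le one_pos hb
  have key : ‖a‖⁻¹ • a - ‖b‖⁻¹ • b = ‖a‖⁻¹ • (a - b) + (‖a‖⁻¹ - ‖b‖⁻¹) • b := by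
    rw [smul_sub, sub_smul]; abel
  have h1 : ‖‖a‖⁻¹ • (a - b)‖ ≤ 1 * ‖a - b‖ := by
    rw [norm_smul, Real.norm_eq_abs, abs_of_pos (inv_pos.mpr ha0)]
    apply mul_le_mul_of_nonneg_right _ (norm_nonneg _)
    exact inv_le_one_of_one_le₀ ha
  have h2 : ‖(‖a‖⁻¹ - ‖b‖⁻¹) • b‖ ≤ 1 * ‖a - b‖ := by
    rw [norm_smul, Real.norm_eq_abs, one_mul]
    have hid : ‖a‖⁻¹ - ‖b‖⁻¹ = (‖b‖ - ‖a‖)/(‖a‖ * ‖b‖) := by field_simp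
    rw [hid, abs_div, abs_of_pos (mul_pos ha0 hb0)]
    have hq : |‖b‖ - ‖a‖| / (‖a‖ * ‖b‖) * ‖b‖ = |‖b‖ - ‖a‖| / ‖a‖ := by
      field_simp
    rw [hq]
    calc |‖b‖ - ‖a‖| / ‖a‖ ≤ |‖b‖ - ‖a‖| / 1 := by gcongr
    _ = |‖b‖ - ‖a‖| := div_one _
    _ ≤ ‖b - a‖ := abs_norm_sub_norm_le _ _
    _ = ‖a - b‖ := norm_sub_rev _ _
  calc ‖‖a‖⁻¹ • a - ‖b‖⁻¹ • b‖ = ‖‖a‖⁻¹ • (a - b) + (‖a‖⁻¹ - ‖b‖⁻¹) • b‖ := by rw [key]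
  _ ≤ ‖‖a‖⁻¹ • (a - b)‖ + ‖(‖a‖⁻¹ - ‖b‖⁻¹) • b‖ := norm_add_le _ _
  _ ≤ 1 * ‖a - b‖ + 1 * ‖a - b‖ := add_le_add h1 h2
  _ = 2 * ‖a - b‖ := by ring

lemma eucl_sphere_lt_top (k : ℕ) : μH[(k:ℝ)+1] (sphere (0 : Eucl (k+2)) 1) < ∞ := by
  have hd : (0:ℝ) ≤ (k:ℝ)+1 := by positivity
  set e := WithLp.equiv 2 (Fin (k+2) → ℝ) with he
  set c : ℝ≥0 := (Fintype.card (Fin (k+2)) : ℝ≥0) ^ ((1:ℝ≥0∞)/2).toReal with hc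
  have hlips : LipschitzWith c ⇑e.symm :=
    (PiLp.antilipschitzWith_ofLp 2 _).to_rightInverse (WithLp.ofLp_toLp 2)
  set ν : (Fin (k+2) → ℝ) → Eucl (k+2) := fun x => ‖e.symm x‖⁻¹ • e.symm x with hν
  set S := sphere (0 : Fin (k+2) → ℝ) 1 with hS
  -- points of S have euclidean norm ≥ 1
  have hge1 : ∀ x ∈ S, 1 ≤ ‖e.symm x‖ := by
    intro x hx
    rw [hS, mem_sphere_zero_iff_norm] at hx
    obtain ⟨i, -, hi⟩ := Finset.exists_mem_eq_sup Finset.univ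
      ⟨0, Finset.mem_univ 0⟩ (fun i => ‖x i‖₊)
    have : ‖x i‖ = 1 := by
      have hnn : ‖x‖₊ = 1 := by ext; exact hx
      rw [Pi.nnnorm_def, hi] at hnn
      rw [← coe_nnnorm, hnn, NNReal.coe_one]
    calc (1:ℝ) = ‖x i‖ := this.symm
    _ = ‖(e.symm x) i‖ := rfl
    _ ≤ ‖e.symm x‖ := eucl_coord_le_norm _ _
  have hlip : LipschitzOnWith (2 * c) ν S := by
    rw [lipschitzOnWith_iff_dist_le_mul]
    intro x hx y hy
    rw [dist_eq_norm, dist_eq_norm]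
    calc ‖ν x - ν y‖ ≤ 2 * ‖e.symm x - e.symm y‖ :=
          normalize_lipschitz _ _ (hge1 x hx) (hge1 y hy)
    _ ≤ 2 * ((c:ℝ) * ‖x - y‖) := by
        gcongr
        have h := hlips.dist_le_mul (x) (y)
        rw [dist_eq_norm, dist_eq_norm] at h
        exact h
    _ = ↑(2 * c) * ‖x - y‖ := by push_cast; ring
  have hcover : sphere (0 : Eucl (k+2)) 1 ⊆ ν '' S := by
    intro u hu
    rw [mem_sphere_zero_iff_norm] at hu
    have hu0 : u ≠ 0 := by
      intro h; rw [h] at hu; simp at hu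
    set x : Fin (k+2) → ℝ := ‖e u‖⁻¹ • (e u) with hx
    have heu : ‖e u‖ ≠ 0 := by
      simp only [ne_eq, norm_eq_zero]
      intro h
      exact hu0 (by simpa [e] using congrArg e.symm h)
    refine ⟨x, ?_, ?_⟩
    · rw [hS, mem_sphere_zero_iff_norm, hx, norm_smul, Real.norm_eq_abs,
        abs_of_pos (inv_pos.mpr (lt_of_le_of_ne (norm_nonneg _) (Ne.symm heu)))]
      field_simp
    · have hsymm : e.symm x = ‖e u‖⁻¹ • u := by
        rw [hx]; rfl
      rw [hν]
      simp only [hsymm]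
      rw [norm_smul, Real.norm_eq_abs, abs_of_pos
        (inv_pos.mpr (lt_of_le_of_ne (norm_nonneg _) (Ne.symm heu))), hu, mul_one, smul_smul,
        inv_inv, mul_inv_cancel₀ heu, one_smul]
  calc μH[(k:ℝ)+1] (sphere (0 : Eucl (k+2)) 1) ≤ μH[(k:ℝ)+1] (ν '' S) := measure_mono hcover
  _ ≤ (↑(2*c))^((k:ℝ)+1) * μH[(k:ℝ)+1] S := hlip.hausdorffMeasure_image_le hd
  _ < ∞ := ENNReal.mul_lt_top (ENNReal.rpow_lt_top_of_nonneg hd ENNReal.coe_ne_top)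
      (pi_sphere_lt_top k)

lemma eucl_sphere_pos (k : ℕ) : 0 < μH[(k:ℝ)+1] (sphere (0 : Eucl (k+2)) 1) := by
  have hd : (0:ℝ) ≤ (k:ℝ)+1 := by positivity
  set P : Eucl (k+2) → Eucl (k+1) := fun x => WithLp.toLp 2 (fun j : Fin (k+1) => x j.succ) with hP
  have hPlip : LipschitzWith 1 P := by
    apply LipschitzWith.of_dist_le_mul
    intro x y
    rw [NNReal.coe_one, one_mul, EuclideanSpace.dist_eq, EuclideanSpace.dist_eq]
    apply Real.sqrt_le_sqrt
    rw [Fin.sum_univ_succ (f := fun i => dist (x i) (y i) ^ 2)]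
    have : (0:ℝ) ≤ dist (x 0) (y 0)^2 := by positivity
    linarith [le_refl (∑ i : Fin (k+1), dist (x i.succ) (y i.succ) ^ 2)]
  have hsub : closedBall (0 : Eucl (k+1)) 1 ⊆ P '' sphere (0 : Eucl (k+2)) 1 := by
    intro u hu
    rw [mem_closedBall_zero_iff] at hu
    have hu2 : ∑ j, ‖u j‖^2 = ‖u‖^2 := by
      rw [EuclideanSpace.norm_eq, Real.sq_sqrt (by positivity)]
    set a : ℝ := Real.sqrt (1 - ‖u‖^2) with ha
    have ha2 : a^2 = 1 - ‖u‖^2 := Real.sq_sqrt (by nlinarith [norm_nonneg u])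
    set x : Eucl (k+2) := WithLp.toLp 2 (fun i => Fin.cases a (fun j => u j) i) with hx
    refine ⟨x, ?_, ?_⟩
    · rw [mem_sphere_zero_iff_norm, EuclideanSpace.norm_eq]
      rw [Fin.sum_univ_succ (f := fun i => ‖x i‖^2)]
      have h0 : ‖x 0‖^2 = a^2 := by
        rw [hx]; simp [Real.norm_eq_abs, sq_abs]
      have hsucc : ∀ j : Fin (k+1), ‖x j.succ‖^2 = ‖u j‖^2 := by
        intro j; rw [hx]; simp
      rw [h0]
      rw [Finset.sum_congr rfl (fun j _ => hsucc j)]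
      rw [hu2, ha2]
      norm_num
    · ext j
      rw [hP]
      show x j.succ = u j
      rw [hx]
      simp
  calc (0:ℝ≥0∞) < μH[(k:ℝ)+1] (closedBall (0 : Eucl (k+1)) 1) := by
        have hcast : ((k:ℝ)+1) = ((k+1 : ℕ) : ℝ) := by push_cast; ring
        rw [hcast]
        exact muH_eucl_pos (k+1) (Nat.succ_pos k) _ 1 one_pos ball_subset_closedBall
  _ ≤ μH[(k:ℝ)+1] (P '' sphere (0 : Eucl (k+2)) 1) := measure_mono hsub
  _ ≤ (1:ℝ≥0)^((k:ℝ)+1) * μH[(k:ℝ)+1] (sphere (0 : Eucl (k+2)) 1) :=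
      hPlip.hausdorffMeasure_image_le hd _
  _ = μH[(k:ℝ)+1] (sphere (0 : Eucl (k+2)) 1) := by
      rw [ENNReal.coe_one, ENNReal.one_rpow, one_mul]

lemma sph_meas_pos (n : ℕ) (hn : 3 ≤ n) :
    0 < μH[(n:ℝ)-1] (sphere (0 : Eucl n) 1) ∧ μH[(n:ℝ)-1] (sphere (0 : Eucl n) 1) < ∞ := by
  obtain ⟨m, rfl⟩ : ∃ m, n = m + 3 := ⟨n - 3, by omega⟩
  have hcast : ((m+3 : ℕ):ℝ) - 1 = ((m+1 : ℕ):ℝ) + 1 := by push_cast; ring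
  rw [hcast]
  exact ⟨eucl_sphere_pos (m+1), eucl_sphere_lt_top (m+1)⟩

lemma subsph_meas_pos (n : ℕ) (hn : 3 ≤ n) (θ : Eucl n) (hθ : θ ∈ sphere (0 : Eucl n) 1) :
    0 < μH[(n:ℝ)-2] (sphere (0 : Eucl n) 1 ∩ {x : Eucl n | ⟪x, θ⟫ = 0}) ∧
    μH[(n:ℝ)-2] (sphere (0 : Eucl n) 1 ∩ {x : Eucl n | ⟪x, θ⟫ = 0}) < ∞ := by
  obtain ⟨m, rfl⟩ : ∃ m, n = m + 3 := ⟨n - 3, by omega⟩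
  have hθ0 : θ ≠ 0 := by
    intro h
    rw [mem_sphere_zero_iff_norm, h] at hθ
    simp at hθ
  set W : Submodule ℝ (Eucl (m+3)) := (ℝ ∙ θ)ᗮ with hWdef
  haveI : Fact (Module.finrank ℝ (Eucl (m+3)) = (m+2) + 1) :=
    ⟨by simp [finrank_euclideanSpace_fin]⟩
  have hW : Module.finrank ℝ W = m + 2 := Submodule.finrank_orthogonal_span_singleton hθ0
  have e : W ≃ₗᵢ[ℝ] EuclideanSpace ℝ (Fin (m+2)) := hW ▸ (stdOrthonormalBasis ℝ W).repr
  set f : Eucl (m+2) → Eucl (m+3) := fun u => ((e.symm u : W) : Eucl (m+3)) with hf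
  have hiso : Isometry f := isometry_subtype_coe.comp e.symm.isometry
  have hmemW : ∀ x : Eucl (m+3), x ∈ W ↔ ⟪x, θ⟫ = 0 := by
    intro x
    rw [hWdef, Submodule.mem_orthogonal_singleton_iff_inner_right]
    constructor
    · intro h; rw [real_inner_comm]; exact h
    · intro h; rw [real_inner_comm]; exact h
  have himg : f '' sphere (0 : Eucl (m+2)) 1
      = sphere (0 : Eucl (m+3)) 1 ∩ {x : Eucl (m+3) | ⟪x, θ⟫ = 0} := by
    ext x
    constructor
    · rintro ⟨u, hu, rfl⟩
      rw [mem_sphere_zero_iff_norm] at hu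
      constructor
      · rw [mem_sphere_zero_iff_norm]
        calc ‖f u‖ = ‖e.symm u‖ := rfl
        _ = ‖u‖ := e.symm.norm_map u
        _ = 1 := hu
      · exact (hmemW _).mp (e.symm u).2
    · rintro ⟨hx1, hx2⟩
      have hxW : x ∈ W := (hmemW x).mpr hx2
      refine ⟨e ⟨x, hxW⟩, ?_, ?_⟩
      · rw [mem_sphere_zero_iff_norm, e.norm_map]
        rw [mem_sphere_zero_iff_norm] at hx1
        exact hx1
      · rw [hf]
        simp only [LinearIsometryEquiv.symm_apply_apply]
  have hd : (0:ℝ) ≤ ((m+3:ℕ):ℝ) - 2 := by push_cast; linarith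
  have hmeas : μH[((m+3:ℕ):ℝ)-2] (sphere (0 : Eucl (m+3)) 1 ∩ {x : Eucl (m+3) | ⟪x, θ⟫ = 0})
      = μH[((m+3:ℕ):ℝ)-2] (sphere (0 : Eucl (m+2)) 1) := by
    rw [← himg]
    exact hiso.hausdorffMeasure_image (Or.inl hd) _
  rw [hmeas]
  have hcast : ((m+3:ℕ):ℝ) - 2 = ((m:ℕ):ℝ) + 1 := by push_cast; ring
  rw [hcast]
  exact ⟨eucl_sphere_pos m, eucl_sphere_lt_top m⟩

lemma isProbability_smul_restrict {X : Type*} [MeasurableSpace X] (μ : Measure X) (S : Set X)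
    (h1 : μ S ≠ 0) (h2 : μ S ≠ ∞) : IsProbabilityMeasure ((μ S)⁻¹ • μ.restrict S) := by
  constructor
  rw [Measure.smul_apply, Measure.restrict_apply_univ, smul_eq_mul,
    ENNReal.inv_mul_cancel h1 h2]

lemma sphσ_prob (n : ℕ) (hn : 3 ≤ n) : IsProbabilityMeasure (sphσ n) := by
  obtain ⟨h1, h2⟩ := sph_meas_pos n hn
  exact isProbability_smul_restrict _ _ (ne_of_gt h1) (ne_of_lt h2)

lemma subsphσ_prob (n : ℕ) (hn : 3 ≤ n) (θ : Eucl n) (hθ : θ ∈ sphere (0 : Eucl n) 1) :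
    IsProbabilityMeasure (subsphσ n θ) := by
  obtain ⟨h1, h2⟩ := subsph_meas_pos n hn θ hθ
  exact isProbability_smul_restrict _ _ (ne_of_gt h1) (ne_of_lt h2)

variable {n : ℕ} {K : Set (Eucl n)}

lemma IsSymmConvexBody.zero_mem (hK : IsSymmConvexBody K) : (0 : Eucl n) ∈ K := by
  obtain ⟨hconv, hcomp, hint, hsymm⟩ := hK
  obtain ⟨x, hx⟩ := hint
  have hxK : x ∈ K := interior_subset hx
  have hmx : -x ∈ K := by
    have : x ∈ -K := by rw [← hsymm]; exact hxK
    exact Set.mem_neg.mp (by simpa using this)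
  have h := hconv hxK hmx (by norm_num : (0:ℝ) ≤ 1/2) (by norm_num : (0:ℝ) ≤ 1/2) (by norm_num)
  have heq : (1/2 : ℝ) • x + (1/2 : ℝ) • (-x) = (0 : Eucl n) := by module
  rwa [heq] at h

lemma IsSymmConvexBody.bddAbove_radSet (hK : IsSymmConvexBody K) (θ : Eucl n) (hθ : ‖θ‖ = 1) :
    BddAbove {t : ℝ | 0 < t ∧ t • θ ∈ K} := by
  obtain ⟨R, hR⟩ := hK.2.1.isBounded.subset_closedBall 0
  refine ⟨R, fun t ht => ?_⟩
  obtain ⟨ht0, htK⟩ := ht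
  have := hR htK
  rw [mem_closedBall_zero_iff, norm_smul, hθ, mul_one, Real.norm_eq_abs,
    abs_of_pos ht0] at this
  exact this

lemma radSet_nonempty (hK : IsSymmConvexBody K) {θ : Eucl n} (hθ : ‖θ‖ = 1)
    {c : ℝ} (hc : 0 < c) (hrad : c ≤ radFn K θ) :
    {t : ℝ | 0 < t ∧ t • θ ∈ K}.Nonempty := by
  by_contra h
  rw [Set.not_nonempty_iff_eq_empty] at h
  rw [radFn, h, Real.sSup_empty] at hrad
  linarith

lemma IsSymmConvexBody.radFn_smul_mem (hK : IsSymmConvexBody K) {θ : Eucl n} (hθ : ‖θ‖ = 1)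
    (hne : {t : ℝ | 0 < t ∧ t • θ ∈ K}.Nonempty) : (radFn K θ) • θ ∈ K := by
  have hcl : sSup {t : ℝ | 0 < t ∧ t • θ ∈ K} ∈ closure {t : ℝ | 0 < t ∧ t • θ ∈ K} :=
    csSup_mem_closure hne (hK.bddAbove_radSet θ hθ)
  have hsub : closure {t : ℝ | 0 < t ∧ t • θ ∈ K} ⊆ (fun t : ℝ => t • θ) ⁻¹' K := by
    apply closure_minimal
    · intro t ht; exact ht.2
    · exact IsClosed.preimage (by continuity) hK.2.1.isClosed
  exact hsub hcl

lemma IsSymmConvexBody.smul_mem_of_le_radFn (hK : IsSymmConvexBody K) {θ : Eucl n}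
    (hθ : ‖θ‖ = 1) {t : ℝ} (ht0 : 0 < t) (htle : t ≤ radFn K θ) : t • θ ∈ K := by
  have hne := radSet_nonempty hK hθ ht0 htle
  have hρ : (0:ℝ) < radFn K θ := lt_of_lt_of_le ht0 htle
  have hp := hK.radFn_smul_mem hθ hne
  have h0 := hK.zero_mem
  have hcvx := hK.1
  have h := hcvx hp h0 (a := t / radFn K θ) (b := 1 - t / radFn K θ)
    (by positivity) (by
      have : t / radFn K θ ≤ 1 := (div_le_one hρ).mpr htle
      linarith) (by ring)
  have heq : (t / radFn K θ) • ((radFn K θ) • θ) + (1 - t / radFn K θ) • (0 : Eucl n)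
      = t • θ := by
    rw [smul_zero, add_zero, smul_smul, div_mul_cancel₀]
    exact ne_of_gt hρ
  rwa [heq] at h

lemma IsSymmConvexBody.radFn_le_of_mem (hK : IsSymmConvexBody K) {θ : Eucl n}
    (hθ : ‖θ‖ = 1) {t : ℝ} (ht0 : 0 < t) (htK : t • θ ∈ K) : t ≤ radFn K θ :=
  le_csSup (hK.bddAbove_radSet θ hθ) ⟨ht0, htK⟩

section Bounded

variable {δ : ℝ} (hδ0 : 0 < δ) (hδ1 : δ ≤ 1/2)
  (hK : IsSymmConvexBody K)
  (hbnd : ∀ θ ∈ sphere (0 : Eucl n) 1, radFn K θ ∈ Icc (1 - δ) (1 + δ))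

include hδ0 hδ1 hK hbnd

lemma closedBall_subset_body : closedBall (0 : Eucl n) (1 - δ) ⊆ K := by
  intro x hx
  rw [mem_closedBall_zero_iff] at hx
  rcases eq_or_ne x 0 with rfl | hx0
  · exact hK.zero_mem
  · have hnx : (0:ℝ) < ‖x‖ := norm_pos_iff.mpr hx0
    set u : Eucl n := ‖x‖⁻¹ • x with hu
    have huS : ‖u‖ = 1 := by
      rw [hu, norm_smul, Real.norm_eq_abs, abs_of_pos (inv_pos.mpr hnx), inv_mul_cancel₀
        (ne_of_gt hnx)]
    have hrad := hbnd u (by rwa [mem_sphere_zero_iff_norm])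
    have hle : ‖x‖ ≤ radFn K u := le_trans hx (by linarith [hrad.1])
    have := hK.smul_mem_of_le_radFn huS hnx hle
    rwa [hu, smul_smul, mul_inv_cancel₀ (ne_of_gt hnx), one_smul] at this

lemma radFn_lipschitzOn : LipschitzOnWith 5 (radFn K) (sphere (0 : Eucl n) 1) := by
  have key : ∀ x ∈ sphere (0 : Eucl n) 1, ∀ y ∈ sphere (0 : Eucl n) 1,
      radFn K x - 5 * ‖x - y‖ ≤ radFn K y := by
    intro x hx y hy
    rw [mem_sphere_zero_iff_norm] at hx hy
    have hbx := hbnd x (by rwa [mem_sphere_zero_iff_norm])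
    have hby := hbnd y (by rwa [mem_sphere_zero_iff_norm])
    set t : ℝ := radFn K x with htdef
    set h : ℝ := ‖x - y‖ with hhdef
    set s : ℝ := t - 5 * h with hsdef
    rcases le_or_gt s (1/2) with hs | hs
    · calc s ≤ 1/2 := hs
      _ ≤ 1 - δ := by linarith
      _ ≤ radFn K y := hby.1
    · -- s > 1/2 > 0
      have hh0 : 0 ≤ h := norm_nonneg _
      rcases eq_or_lt_of_le hh0 with hh | hh
      · -- h = 0, x = y
        have hxy : x = y := sub_eq_zero.mp (norm_eq_zero.mp hh.symm)
        have hst : s = t := by rw [hsdef, ← hh]; ring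
        rw [hst, htdef, hxy]
      · have ht0 : (0:ℝ) < t := by
          have : (0:ℝ) < s := by linarith
          rw [hsdef] at this; nlinarith
        have hst : s < t := by rw [hsdef]; nlinarith
        set lam : ℝ := s / t with hlam
        have hlam1 : lam < 1 := (div_lt_one ht0).mpr hst
        have hlam0 : 0 < lam := by positivity
        set z : Eucl n := ((1 - lam)⁻¹ * s) • (y - x) with hz
        have h1lam : 1 - lam = 5 * h / t := by
          rw [hlam, hsdef]; field_simp; ring
        have hznorm : ‖z‖ ≤ 1 - δ := by
          rw [hz, norm_smul, Real.norm_eq_abs, h1lam]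
          have hcoef : |(5 * h / t)⁻¹ * s| = t * s / (5 * h) := by
            rw [abs_of_pos]
            · field_simp
            · apply mul_pos
              · apply inv_pos.mpr; positivity
              · linarith
          rw [hcoef, norm_sub_rev]
          have ht32 : t ≤ 3/2 := by
            calc t ≤ 1 + δ := hbx.2
            _ ≤ 3/2 := by linarith
          have hs32 : s ≤ 3/2 := by linarith
          calc t * s / (5 * h) * h = t * s / 5 := by field_simp
          _ ≤ (3/2) * (3/2) / 5 := by
              have hts : t * s ≤ (3/2) * (3/2) := by nlinarith
              linarith
          _ ≤ 1 - δ := by linarith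
        have hzK : z ∈ K := closedBall_subset_body hδ0 hδ1 hK hbnd
          (by rw [mem_closedBall_zero_iff]; exact hznorm)
        have hne : {c : ℝ | 0 < c ∧ c • x ∈ K}.Nonempty :=
          radSet_nonempty hK hx (by linarith : (0:ℝ) < 1 - δ) hbx.1
        have hpK : t • x ∈ K := hK.radFn_smul_mem hx hne
        have hstar : StarConvex ℝ (t • x) K := hK.1 hpK
        have hcomb : lam • (t • x) + (1 - lam) • z ∈ K :=
          hstar hzK hlam0.le (by linarith) (by ring)
        have h1lamne : (1:ℝ) - lam ≠ 0 := ne_of_gt (by linarith)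
        have heq : lam • (t • x) + (1 - lam) • z = s • y := by
          rw [hz, smul_smul, smul_smul]
          have he1 : lam * t = s := by rw [hlam]; field_simp
          have he2 : (1 - lam) * ((1 - lam)⁻¹ * s) = s := by field_simp
          rw [he1, he2, smul_sub]
          abel
        rw [heq] at hcomb
        have hs0 : (0:ℝ) < s := by linarith
        exact hK.radFn_le_of_mem hy hs0 hcomb
  rw [lipschitzOnWith_iff_dist_le_mul]
  intro x hx y hy
  rw [Real.dist_eq, dist_eq_norm]
  have h1 := key x hx y hy
  have h2 := key y hy x hx
  rw [norm_sub_rev y x] at h2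
  have hc : ((5:ℝ≥0):ℝ) = 5 := by norm_num
  rw [hc, abs_le]
  constructor
  · linarith
  · linarith

end Bounded

lemma rpow_le_twopow (p x : ℝ) (hx : x ∈ Icc (1/2:ℝ) 2) : x ^ p ≤ 2 ^ |p| := by
  obtain ⟨hx1, hx2⟩ := hx
  have hx0 : (0:ℝ) < x := by linarith
  rcases le_or_gt 0 p with hp | hp
  · rw [abs_of_nonneg hp]
    exact Real.rpow_le_rpow (le_of_lt hx0) hx2 hp
  · rw [abs_of_neg hp]
    have h1 : x ^ p = (x⁻¹) ^ (-p) := by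
      rw [Real.inv_rpow hx0.le, Real.rpow_neg hx0.le, inv_inv]
    rw [h1]
    apply Real.rpow_le_rpow (by positivity) _ (by linarith)
    rw [inv_le_comm₀ hx0 (by norm_num)]
    linarith

lemma rpow_lip (γ : ℝ) (a b : ℝ) (ha : a ∈ Icc (1/2:ℝ) 2) (hb : b ∈ Icc (1/2:ℝ) 2) :
    |a ^ γ - b ^ γ| ≤ (|γ| * 2 ^ |γ-1|) * |a - b| := by
  have hderiv : ∀ x ∈ Icc (1/2:ℝ) 2,
      HasDerivWithinAt (fun x : ℝ => x ^ γ) (γ * x ^ (γ-1)) (Icc (1/2:ℝ) 2) x := by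
    intro x hx
    exact (Real.hasDerivAt_rpow_const
      (Or.inl (ne_of_gt (by linarith [hx.1] : (0:ℝ) < x)))).hasDerivWithinAt
  have hbound : ∀ x ∈ Icc (1/2:ℝ) 2, ‖γ * x ^ (γ-1)‖ ≤ |γ| * 2 ^ |γ-1| := by
    intro x hx
    rw [Real.norm_eq_abs, abs_mul]
    apply mul_le_mul_of_nonneg_left _ (abs_nonneg γ)
    rw [abs_of_nonneg (Real.rpow_nonneg (by linarith [hx.1] : (0:ℝ) ≤ x) _)]
    exact rpow_le_twopow _ x hx
  have := Convex.norm_image_sub_le_of_norm_hasDerivWithin_le hderiv hbound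
    (convex_Icc _ _) hb ha
  simpa [Real.norm_eq_abs] using this

lemma abs_sub_le_of_uIcc {a b x : ℝ} (hx : x ∈ uIcc a b) : |x - b| ≤ |a - b| := by
  rcases le_total a b with hab | hab
  · rw [uIcc_of_le hab] at hx
    rw [abs_of_nonpos (by linarith [hx.2] : x - b ≤ 0),
      abs_of_nonpos (by linarith : a - b ≤ 0)]
    linarith [hx.1]
  · rw [uIcc_of_ge hab] at hx
    rw [abs_of_nonneg (by linarith [hx.1] : (0:ℝ) ≤ x - b),
      abs_of_nonneg (by linarith : (0:ℝ) ≤ a - b)]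
    linarith [hx.2]

lemma uIcc_subset_std {a b : ℝ} (ha : a ∈ Icc (1/2:ℝ) 2) (hb : b ∈ Icc (1/2:ℝ) 2) :
    uIcc a b ⊆ Icc (1/2:ℝ) 2 := by
  intro x hx
  rw [mem_uIcc] at hx
  rcases hx with ⟨h1, h2⟩ | ⟨h1, h2⟩
  · exact ⟨le_trans ha.1 h1, le_trans h2 hb.2⟩
  · exact ⟨le_trans hb.1 h1, le_trans h2 ha.2⟩

lemma rpow_taylor2 (γ : ℝ) (a b : ℝ) (ha : a ∈ Icc (1/2:ℝ) 2) (hb : b ∈ Icc (1/2:ℝ) 2) :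
    |a ^ γ - b ^ γ - γ * b ^ (γ-1) * (a - b)| ≤ (|γ| * (|γ-1| * 2 ^ |γ-1-1|)) * |a - b|^2 := by
  set c : ℝ := γ * b ^ (γ-1) with hc
  set s : Set ℝ := uIcc a b with hs
  have hsub : s ⊆ Icc (1/2:ℝ) 2 := uIcc_subset_std ha hb
  set M₂ : ℝ := |γ-1| * 2 ^ |γ-1-1| with hM₂
  have hderiv : ∀ x ∈ s, HasDerivWithinAt (fun x : ℝ => x ^ γ - c * x)
      (γ * x ^ (γ-1) - c) s x := by
    intro x hx
    have hx' := hsub hx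
    have h1 : HasDerivAt (fun x : ℝ => x ^ γ) (γ * x ^ (γ-1)) x :=
      Real.hasDerivAt_rpow_const (Or.inl (ne_of_gt (by linarith [hx'.1] : (0:ℝ) < x)))
    have h2 : HasDerivAt (fun x : ℝ => c * x) c x := by
      simpa using (hasDerivAt_id x).const_mul c
    exact (h1.sub h2).hasDerivWithinAt
  have hbound : ∀ x ∈ s, ‖γ * x ^ (γ-1) - c‖ ≤ (|γ| * M₂) * |a - b| := by
    intro x hx
    have hx' := hsub hx
    rw [Real.norm_eq_abs, hc]
    have h3 : γ * x ^ (γ-1) - γ * b ^ (γ-1) = γ * (x ^ (γ-1) - b ^ (γ-1)) := by ring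
    rw [h3, abs_mul]
    have h4 : |x ^ (γ-1) - b ^ (γ-1)| ≤ M₂ * |x - b| := rpow_lip (γ-1) x b hx' hb
    calc |γ| * |x ^ (γ-1) - b ^ (γ-1)| ≤ |γ| * (M₂ * |x - b|) :=
          mul_le_mul_of_nonneg_left h4 (abs_nonneg γ)
    _ ≤ |γ| * (M₂ * |a - b|) := by
        apply mul_le_mul_of_nonneg_left _ (abs_nonneg γ)
        apply mul_le_mul_of_nonneg_left (abs_sub_le_of_uIcc hx) (by positivity)
    _ = (|γ| * M₂) * |a - b| := by ring
  have hmem_a : a ∈ s := left_mem_uIcc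
  have hmem_b : b ∈ s := right_mem_uIcc
  have := Convex.norm_image_sub_le_of_norm_hasDerivWithin_le hderiv hbound
    (convex_uIcc a b) hmem_b hmem_a
  rw [Real.norm_eq_abs, Real.norm_eq_abs] at this
  have heq : (a ^ γ - c * a) - (b ^ γ - c * b) = a ^ γ - b ^ γ - γ * b ^ (γ-1) * (a - b) := by
    rw [hc]; ring
  rw [heq] at this
  calc |a ^ γ - b ^ γ - γ * b ^ (γ-1) * (a - b)| ≤ |γ| * M₂ * |a - b| * |a - b| := this
  _ = (|γ| * M₂) * |a - b|^2 := by ring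

lemma integrable_aux {n : ℕ} (d : ℝ) (S : Set (Eucl n)) (hSmeas : MeasurableSet S)
    (hScpt : IsCompact S) (h0 : μH[d] S ≠ 0) (hfin : μH[d] S ≠ ∞) (f : Eucl n → ℝ)
    (hf : ContinuousOn f S) :
    Integrable f ((μH[d] S)⁻¹ • (μH[d]).restrict S) := by
  haveI : IsFiniteMeasure ((μH[d] : Measure (Eucl n)).restrict S) :=
    ⟨by rw [Measure.restrict_apply_univ]; exact lt_top_iff_ne_top.mpr hfin⟩
  apply Integrable.smul_measure _ (ENNReal.inv_ne_top.mpr h0)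
  obtain ⟨C, hC⟩ := hScpt.exists_bound_of_continuousOn hf
  apply Integrable.mono' (integrable_const C) (hf.aestronglyMeasurable hSmeas)
  refine (ae_restrict_iff' hSmeas).mpr (ae_of_all _ fun x hx => ?_)
  exact hC x hx

lemma sphere_inter_meas {n : ℕ} (θ : Eucl n) :
    MeasurableSet (sphere (0 : Eucl n) 1 ∩ {x : Eucl n | ⟪x, θ⟫ = 0}) := by
  apply MeasurableSet.inter
  · exact Metric.isClosed_sphere.measurableSet
  · exact (isClosed_eq (continuous_id.inner continuous_const) continuous_const).measurableSet

lemma sphere_inter_cpt {n : ℕ} (θ : Eucl n) :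
    IsCompact (sphere (0 : Eucl n) 1 ∩ {x : Eucl n | ⟪x, θ⟫ = 0}) := by
  apply (isCompact_sphere 0 1).inter_right
  exact isClosed_eq (continuous_id.inner continuous_const) continuous_const

lemma integrable_sphσ (n : ℕ) (hn : 3 ≤ n) (f : Eucl n → ℝ)
    (hf : ContinuousOn f (sphere (0 : Eucl n) 1)) : Integrable f (sphσ n) := by
  obtain ⟨h1, h2⟩ := sph_meas_pos n hn
  exact integrable_aux _ _ Metric.isClosed_sphere.measurableSet (isCompact_sphere 0 1)
    (ne_of_gt h1) (ne_of_lt h2) f hf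

lemma integrable_subsphσ (n : ℕ) (hn : 3 ≤ n) (θ : Eucl n) (hθ : θ ∈ sphere (0 : Eucl n) 1)
    (f : Eucl n → ℝ) (hf : ContinuousOn f (sphere (0 : Eucl n) 1)) :
    Integrable f (subsphσ n θ) := by
  obtain ⟨h1, h2⟩ := subsph_meas_pos n hn θ hθ
  exact integrable_aux _ _ (sphere_inter_meas θ) (sphere_inter_cpt θ)
    (ne_of_gt h1) (ne_of_lt h2) f (hf.mono inter_subset_left)

lemma ae_sphσ (n : ℕ) : ∀ᵐ x ∂(sphσ n), x ∈ sphere (0 : Eucl n) 1 :=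
  Measure.ae_smul_measure (ae_restrict_mem Metric.isClosed_sphere.measurableSet) _

lemma ae_subsphσ (n : ℕ) (θ : Eucl n) : ∀ᵐ x ∂(subsphσ n θ), x ∈ sphere (0 : Eucl n) 1 :=
  Measure.ae_smul_measure ((ae_restrict_mem (sphere_inter_meas θ)).mono fun x hx => hx.1) _



/-- the linearization of `(R[ρ_K^α])^β` for bodies close to the
unit ball (Section 8). -/
theorem stmt_14 (n : ℕ) (hn : 3 ≤ n) (α β : ℝ) :
    ∃ C : ℝ, 0 < C ∧ ∃ δ₀ ∈ Ioo (0 : ℝ) 1, ∀ δ ∈ Ioo (0 : ℝ) δ₀,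
      ∀ K : Set (Eucl n), IsSymmConvexBody K →
        (∀ θ ∈ sphere (0 : Eucl n) 1, radFn K θ ∈ Icc (1 - δ) (1 + δ)) →
        ∀ θ ∈ sphere (0 : Eucl n) 1,
          |radon n (fun x => radFn K x ^ α) θ ^ β -
              (∫ φ, radFn K φ ∂(sphσ n)) ^ (α * β) -
              α * β * (∫ φ, radFn K φ ∂(sphσ n)) ^ (α * β - 1) *
                radon n (fun x => radFn K x - ∫ φ, radFn K φ ∂(sphσ n)) θ| ≤
            C * δ * radon n (fun x => |radFn K x - ∫ φ, radFn K φ ∂(sphσ n)|) θ := by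
  set Ma : ℝ := |α| * 2 ^ |α - 1| with hMa
  set Ta : ℝ := |α| * (|α - 1| * 2 ^ |α - 1 - 1|) with hTa
  set Tb : ℝ := |β| * (|β - 1| * 2 ^ |β - 1 - 1|) with hTb
  have hMa0 : 0 ≤ Ma := by positivity
  have hTa0 : 0 ≤ Ta := by positivity
  have hTb0 : 0 ≤ Tb := by positivity
  refine ⟨2*Tb*Ma^2 + |β| * 2 ^ |β-1| * (2*Ta) + 1, by positivity,
    min (1/2) (1/(6*Ma+2)), ⟨by positivity, lt_of_le_of_lt (min_le_left _ _) (by norm_num)⟩, ?_⟩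
  intro δ hδ K hK hbnd θ hθ
  have hδ0 : 0 < δ := hδ.1
  have hδhalf : δ ≤ 1/2 := le_of_lt (lt_of_lt_of_le hδ.2 (min_le_left _ _))
  have hδMa : 3*Ma*δ < 1/2 := by
    have h1 : δ < 1/(6*Ma+2) := lt_of_lt_of_le hδ.2 (min_le_right _ _)
    rw [lt_div_iff₀ (by positivity : (0:ℝ) < 6*Ma+2)] at h1
    nlinarith
  -- probability measures
  haveI : IsProbabilityMeasure (sphσ n) := sphσ_prob n hn
  haveI : IsProbabilityMeasure (subsphσ n θ) := subsphσ_prob n hn θ hθ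
  -- continuity
  have hρcont : ContinuousOn (radFn K) (sphere (0 : Eucl n) 1) :=
    (radFn_lipschitzOn hδ0 hδhalf hK hbnd).continuousOn
  have hρpos : ∀ x ∈ sphere (0 : Eucl n) 1, (0:ℝ) < radFn K x := by
    intro x hx
    have := (hbnd x hx).1
    linarith
  have hραcont : ContinuousOn (fun x => radFn K x ^ α) (sphere (0 : Eucl n) 1) :=
    hρcont.rpow_const (fun x hx => Or.inl (ne_of_gt (hρpos x hx)))
  -- r₀
  set r₀ : ℝ := ∫ φ, radFn K φ ∂(sphσ n) with hr₀def
  have hIρsph : Integrable (radFn K) (sphσ n) := integrable_sphσ n hn _ hρcont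
  have hr₀mem : r₀ ∈ Icc (1-δ) (1+δ) := by
    constructor
    · have h := integral_mono_ae (integrable_const (1-δ)) hIρsph
        ((ae_sphσ n).mono fun x hx => (hbnd x hx).1)
      simpa using h
    · have h := integral_mono_ae hIρsph (integrable_const (1+δ))
        ((ae_sphσ n).mono fun x hx => (hbnd x hx).2)
      simpa using h
  have hr₀Icc : r₀ ∈ Icc (1/2:ℝ) 2 := ⟨by linarith [hr₀mem.1], by linarith [hr₀mem.2]⟩
  have hr₀pos : (0:ℝ) < r₀ := by linarith [hr₀Icc.1]
  -- pointwise membership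
  have hρIcc : ∀ x ∈ sphere (0 : Eucl n) 1, radFn K x ∈ Icc (1/2:ℝ) 2 := by
    intro x hx
    exact ⟨by linarith [(hbnd x hx).1], by linarith [(hbnd x hx).2]⟩
  have hρnear : ∀ x ∈ sphere (0 : Eucl n) 1, |radFn K x - r₀| ≤ 2*δ := by
    intro x hx
    have h1 := (hbnd x hx).1
    have h2 := (hbnd x hx).2
    rw [abs_le]
    constructor <;> [linarith [hr₀mem.2]; linarith [hr₀mem.1]]
  -- abbreviations
  set c1 : ℝ := α * r₀ ^ (α - 1) with hc1
  set A : ℝ := radon n (fun x => radFn K x ^ α) θ with hA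
  set E : ℝ := radon n (fun x => radFn K x - r₀) θ with hE
  set F : ℝ := radon n (fun x => |radFn K x - r₀|) θ with hF
  have hAint : A = ∫ x, radFn K x ^ α ∂(subsphσ n θ) := rfl
  have hEint : E = ∫ x, (radFn K x - r₀) ∂(subsphσ n θ) := rfl
  have hFint : F = ∫ x, |radFn K x - r₀| ∂(subsphσ n θ) := rfl
  -- integrability over subsphσ
  have hInt : ∀ f : Eucl n → ℝ, ContinuousOn f (sphere (0 : Eucl n) 1) →
      Integrable f (subsphσ n θ) := fun f hf => integrable_subsphσ n hn θ hθ f hf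
  have hI_f1 : Integrable (fun x => radFn K x ^ α) (subsphσ n θ) := hInt _ hραcont
  have hI_f2 : Integrable (fun x => radFn K x - r₀) (subsphσ n θ) :=
    hInt _ (hρcont.sub continuousOn_const)
  have hI_f2abs : Integrable (fun x => |radFn K x - r₀|) (subsphσ n θ) :=
    hInt _ (hρcont.sub continuousOn_const).abs
  have hI_g1 : Integrable (fun x => radFn K x ^ α - r₀ ^ α) (subsphσ n θ) :=
    hI_f1.sub (integrable_const _)
  have hI_g2 : Integrable (fun x => c1 * (radFn K x - r₀)) (subsphσ n θ) :=
    hI_f2.const_mul c1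
  have hI_g : Integrable (fun x => radFn K x ^ α - r₀ ^ α - c1 * (radFn K x - r₀))
      (subsphσ n θ) := hI_g1.sub hI_g2
  have hI_g1abs : Integrable (fun x => |radFn K x ^ α - r₀ ^ α|) (subsphσ n θ) := hI_g1.abs
  have hI_gabs : Integrable (fun x => |radFn K x ^ α - r₀ ^ α - c1 * (radFn K x - r₀)|)
      (subsphσ n θ) := hI_g.abs
  have hI_cf2 : Integrable (fun x => 2*Ta*δ*|radFn K x - r₀|) (subsphσ n θ) :=
    hI_f2abs.const_mul _
  have hI_Mf2 : Integrable (fun x => Ma*|radFn K x - r₀|) (subsphσ n θ) :=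
    hI_f2abs.const_mul _
  have haeS := ae_subsphσ n θ
  -- F basic facts
  have hF0 : 0 ≤ F := by
    rw [hFint]
    exact integral_nonneg fun x => abs_nonneg _
  have hF2δ : F ≤ 2*δ := by
    rw [hFint]
    have h := integral_mono_ae hI_f2abs (integrable_const (2*δ))
      (haeS.mono fun x hx => hρnear x hx)
    simpa using h
  have hEF : |E| ≤ F := by
    rw [hEint, hFint]
    have := norm_integral_le_integral_norm (μ := subsphσ n θ) (f := fun x => radFn K x - r₀)
    simpa [Real.norm_eq_abs] using this
  -- Step 1 : |A - r₀^α - c1 * E| ≤ 2*Ta*δ*F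
  have hI1 : |A - r₀ ^ α - c1 * E| ≤ 2*Ta*δ*F := by
    have hsplit : ∫ x, (radFn K x ^ α - r₀ ^ α - c1 * (radFn K x - r₀)) ∂(subsphσ n θ)
        = A - r₀ ^ α - c1 * E := by
      rw [hAint, hEint]
      rw [integral_sub hI_g1 hI_g2, integral_sub hI_f1 (integrable_const _),
        integral_const_mul, integral_const]
      simp
    rw [← hsplit]
    calc |∫ x, (radFn K x ^ α - r₀ ^ α - c1 * (radFn K x - r₀)) ∂(subsphσ n θ)|
        ≤ ∫ x, |radFn K x ^ α - r₀ ^ α - c1 * (radFn K x - r₀)| ∂(subsphσ n θ) := by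
          have := norm_integral_le_integral_norm (μ := subsphσ n θ)
            (f := fun x => radFn K x ^ α - r₀ ^ α - c1 * (radFn K x - r₀))
          simpa [Real.norm_eq_abs] using this
    _ ≤ ∫ x, 2*Ta*δ*|radFn K x - r₀| ∂(subsphσ n θ) := by
          apply integral_mono_ae hI_gabs hI_cf2
          apply haeS.mono
          intro x hx
          have htay := rpow_taylor2 α (radFn K x) r₀ (hρIcc x hx) hr₀Icc
          have hnear := hρnear x hx
          have habs0 : (0:ℝ) ≤ |radFn K x - r₀| := abs_nonneg _
          calc |radFn K x ^ α - r₀ ^ α - c1 * (radFn K x - r₀)|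
              = |radFn K x ^ α - r₀ ^ α - α * r₀ ^ (α-1) * (radFn K x - r₀)| := by rw [hc1]
          _ ≤ Ta * |radFn K x - r₀|^2 := htay
          _ = (Ta * |radFn K x - r₀|) * |radFn K x - r₀| := by ring
          _ ≤ (Ta * |radFn K x - r₀|) * (2*δ) := mul_le_mul_of_nonneg_left hnear (by positivity)
          _ = 2*Ta*δ*|radFn K x - r₀| := by ring
    _ = 2*Ta*δ*F := by
          rw [hFint, integral_const_mul]
  -- Step 2 : |A - r₀^α| ≤ Ma * F
  have hI2 : |A - r₀ ^ α| ≤ Ma * F := by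
    have hsplit : ∫ x, (radFn K x ^ α - r₀ ^ α) ∂(subsphσ n θ) = A - r₀ ^ α := by
      rw [hAint, integral_sub hI_f1 (integrable_const _), integral_const]
      simp
    rw [← hsplit]
    calc |∫ x, (radFn K x ^ α - r₀ ^ α) ∂(subsphσ n θ)|
        ≤ ∫ x, |radFn K x ^ α - r₀ ^ α| ∂(subsphσ n θ) := by
          have := norm_integral_le_integral_norm (μ := subsphσ n θ)
            (f := fun x => radFn K x ^ α - r₀ ^ α)
          simpa [Real.norm_eq_abs] using this
    _ ≤ ∫ x, Ma*|radFn K x - r₀| ∂(subsphσ n θ) := by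
          apply integral_mono_ae hI_g1abs hI_Mf2
          apply haeS.mono
          intro x hx
          exact rpow_lip α (radFn K x) r₀ (hρIcc x hx) hr₀Icc
    _ = Ma * F := by rw [hFint, integral_const_mul]
  -- A близко к 1
  have hr₀α1 : |r₀ ^ α - 1| ≤ Ma * δ := by
    have h := rpow_lip α r₀ 1 hr₀Icc (by norm_num)
    rw [Real.one_rpow] at h
    have hr1 : |r₀ - 1| ≤ δ := by
      rw [abs_le]; exact ⟨by linarith [hr₀mem.1], by linarith [hr₀mem.2]⟩
    calc |r₀ ^ α - 1| ≤ Ma * |r₀ - 1| := h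
    _ ≤ Ma * δ := mul_le_mul_of_nonneg_left hr1 hMa0
  have hAsub : |A - r₀ ^ α| ≤ 2*Ma*δ := by
    calc |A - r₀ ^ α| ≤ Ma * F := hI2
    _ ≤ Ma * (2*δ) := mul_le_mul_of_nonneg_left hF2δ hMa0
    _ = 2*Ma*δ := by ring
  have hA1 : |A - 1| ≤ 3*Ma*δ := by
    calc |A - 1| = |(A - r₀ ^ α) + (r₀ ^ α - 1)| := by ring_nf
    _ ≤ |A - r₀ ^ α| + |r₀ ^ α - 1| := abs_add_le _ _
    _ ≤ 2*Ma*δ + Ma*δ := add_le_add hAsub hr₀α1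
    _ = 3*Ma*δ := by ring
  have hAIcc : A ∈ Icc (1/2:ℝ) 2 := by
    rw [abs_le] at hA1
    exact ⟨by linarith [hA1.1], by linarith [hA1.2]⟩
  have hr₀αIcc : r₀ ^ α ∈ Icc (1/2:ℝ) 2 := by
    rw [abs_le] at hr₀α1
    constructor
    · nlinarith [hr₀α1.1, hδ0]
    · nlinarith [hr₀α1.2, hδ0]
  -- Step 3: second-order in β
  have hTβ : |A ^ β - (r₀ ^ α) ^ β - β * (r₀ ^ α) ^ (β-1) * (A - r₀ ^ α)|
      ≤ Tb * |A - r₀ ^ α|^2 := rpow_taylor2 β A (r₀ ^ α) hAIcc hr₀αIcc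
  have hsq : Tb * |A - r₀ ^ α|^2 ≤ 2*Tb*Ma^2*δ*F := by
    have h1 : |A - r₀ ^ α| ≤ Ma * F := hI2
    have h2 : |A - r₀ ^ α| ≤ 2*Ma*δ := hAsub
    have h3 : (0:ℝ) ≤ |A - r₀ ^ α| := abs_nonneg _
    have h4 : |A - r₀ ^ α| * |A - r₀ ^ α| ≤ (Ma*F) * (2*Ma*δ) :=
      mul_le_mul h1 h2 h3 (mul_nonneg hMa0 hF0)
    have h5 : Tb * (|A - r₀ ^ α| * |A - r₀ ^ α|) ≤ Tb * ((Ma*F)*(2*Ma*δ)) :=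
      mul_le_mul_of_nonneg_left h4 hTb0
    calc Tb * |A - r₀ ^ α|^2 = Tb * (|A - r₀ ^ α| * |A - r₀ ^ α|) := by ring
    _ ≤ Tb * ((Ma*F)*(2*Ma*δ)) := h5
    _ = 2*Tb*Ma^2*δ*F := by ring
  have hpowb : (r₀ ^ α) ^ (β - 1) ≤ 2 ^ |β-1| := rpow_le_twopow (β-1) (r₀ ^ α) hr₀αIcc
  have hpowb0 : (0:ℝ) ≤ (r₀ ^ α) ^ (β - 1) := Real.rpow_nonneg (Real.rpow_nonneg hr₀pos.le α) _
  have he₂ : |β * (r₀ ^ α) ^ (β-1) * (A - r₀ ^ α - c1 * E)| ≤ |β| * 2 ^ |β-1| * (2*Ta*δ*F) := by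
    rw [abs_mul, abs_mul]
    have h1 : |(r₀ ^ α) ^ (β-1)| ≤ 2 ^ |β-1| := by
      rw [abs_of_nonneg hpowb0]; exact hpowb
    apply mul_le_mul (mul_le_mul_of_nonneg_left h1 (abs_nonneg β)) hI1 (abs_nonneg _)
      (by positivity)
  -- identities
  have id1 : (r₀ ^ α) ^ β = r₀ ^ (α * β) := by
    rw [← Real.rpow_mul hr₀pos.le]
  have hmulpow : r₀ ^ (α*(β-1)) * r₀ ^ (α-1) = r₀ ^ (α*β-1) := by
    rw [← Real.rpow_add hr₀pos]
    congr 1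
    ring
  have id2 : β * ((r₀ ^ α) ^ (β-1)) * c1 = α * β * r₀ ^ (α*β-1) := by
    rw [hc1, ← Real.rpow_mul hr₀pos.le]
    linear_combination (α * β) * hmulpow
  have hdecomp : A ^ β - r₀ ^ (α*β) - α*β*r₀^(α*β-1)*E =
      (A ^ β - (r₀ ^ α) ^ β - β * (r₀ ^ α) ^ (β-1) * (A - r₀ ^ α)) +
      (β * (r₀ ^ α) ^ (β-1) * (A - r₀ ^ α - c1 * E)) := by
    linear_combination id1 + E * id2
  calc |A ^ β - r₀ ^ (α*β) - α*β*r₀^(α*β-1)*E|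
      = |(A ^ β - (r₀ ^ α) ^ β - β * (r₀ ^ α) ^ (β-1) * (A - r₀ ^ α)) +
        (β * (r₀ ^ α) ^ (β-1) * (A - r₀ ^ α - c1 * E))| := by rw [hdecomp]
  _ ≤ |A ^ β - (r₀ ^ α) ^ β - β * (r₀ ^ α) ^ (β-1) * (A - r₀ ^ α)| +
      |β * (r₀ ^ α) ^ (β-1) * (A - r₀ ^ α - c1 * E)| := abs_add_le _ _
  _ ≤ 2*Tb*Ma^2*δ*F + |β| * 2 ^ |β-1| * (2*Ta*δ*F) := add_le_add (le_trans hTβ hsq) he₂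
  _ ≤ (2*Tb*Ma^2 + |β| * 2 ^ |β-1| * (2*Ta) + 1) * δ * F := by nlinarith [mul_nonneg hδ0.le hF0]

end
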